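/- Let N = (B, E, G) be an occurrence net and let b ∈ B be a condition that is subsumed by a condition b' ∈ B, b ≠ b', i.e. •b = •b' and b• ⊆ b'•. Let N' be the net obtained from N by deleting b and all flow arcs incident to b. Then the ordering relations among events are unchanged: for all events e, f ∈ E, (e,f) ∈ G'* iff (e,f) ∈ G*, and e #_{N'} f iff e #_N f; consequently the concurrency relation restricted to events is also unchanged. -/

import Mathlib

open Relation Sum

/-- The preset `•x` of a node of a net with flow relation `flow`. -/
def preset {C E : Type*} (flow : (C ⊕ E) → (C ⊕ E) → Prop) (x : C ⊕ E) : Set (C ⊕ E) :=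
  {y | flow y x}

/-- The postset `x•` of a node of a net with flow relation `flow`. -/
def postset {C E : Type*} (flow : (C ⊕ E) → (C ⊕ E) → Prop) (x : C ⊕ E) : Set (C ⊕ E) :=
  {y | flow x y}

/-- Causal relation `x ⇝ y` iff `(x,y) ∈ G⁺`. -/
def Causal {C E : Type*} (flow : (C ⊕ E) → (C ⊕ E) → Prop) (x y : C ⊕ E) : Prop :=
  TransGen flow x y

/-- Conflict `x # y` : two distinct events with a common pre-node reach `x` and `y`. -/
def InConflict {C E : Type*} (flow : (C ⊕ E) → (C ⊕ E) → Prop) (x y : C ⊕ E) : Prop :=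
  ∃ t₁ t₂ : E, t₁ ≠ t₂ ∧ (preset flow (inr t₁) ∩ preset flow (inr t₂)).Nonempty ∧
    ReflTransGen flow (inr t₁) x ∧ ReflTransGen flow (inr t₂) y

/-- Concurrency `x ∥ y` : neither causal (either way) nor conflict. -/
def Concurrent {C E : Type*} (flow : (C ⊕ E) → (C ⊕ E) → Prop) (x y : C ⊕ E) : Prop :=
  ¬ Causal flow x y ∧ ¬ Causal flow y x ∧ ¬ InConflict flow x y

/-- The flow relation only connects conditions to events and events to conditions. -/
def IsNet {C E : Type*} (flow : (C ⊕ E) → (C ⊕ E) → Prop) : Prop :=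
  ∀ x y, flow x y → (∃ (b : C) (e : E), x = inl b ∧ y = inr e) ∨
    ∃ (e : E) (b : C), x = inr e ∧ y = inl b

/-- Occurrence net: every condition has at most one pre-event, the net is acyclic,
every node has finitely many causal predecessors, no event is in self-conflict. -/
def IsOccurrenceNet {C E : Type*} (flow : (C ⊕ E) → (C ⊕ E) → Prop) : Prop :=
  IsNet flow ∧
  (∀ b : C, (preset flow (inl b)).Subsingleton) ∧
  Irreflexive (Causal flow) ∧
  (∀ x : C ⊕ E, {y | Causal flow y x}.Finite) ∧
  ∀ e : E, ¬ InConflict flow (inr e) (inr e)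

/-- The flow relation of the net obtained by deleting condition `b` together with
all flow arcs incident to it. -/
def DeleteCond {C E : Type*} (flow : (C ⊕ E) → (C ⊕ E) → Prop) (b : C) :
    (C ⊕ E) → (C ⊕ E) → Prop :=
  fun x y => flow x y ∧ x ≠ inl b ∧ y ≠ inl b

/-- Deleting a subsumed condition `b` (with `•b = •b'` and
`b• ⊆ b'•` for some `b' ≠ b`) from an occurrence net leaves the ordering
relations among events unchanged: causality (`G*`), conflict, and hence also
concurrency restricted to events are preserved. -/
theorem stmt14 {C E : Type*} (flow : (C ⊕ E) → (C ⊕ E) → Prop)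
    (hocc : IsOccurrenceNet flow) (b b' : C) (hne : b ≠ b')
    (hpre : preset flow (inl b) = preset flow (inl b'))
    (hpost : postset flow (inl b) ⊆ postset flow (inl b')) :
    ∀ e f : E,
      (ReflTransGen (DeleteCond flow b) (inr e) (inr f) ↔
        ReflTransGen flow (inr e) (inr f)) ∧
      (InConflict (DeleteCond flow b) (inr e) (inr f) ↔ InConflict flow (inr e) (inr f)) ∧
      (Concurrent (DeleteCond flow b) (inr e) (inr f) ↔ Concurrent flow (inr e) (inr f)) := by
  classical
  obtain ⟨hnet, -, -, -, -⟩ := hocc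
  set σ : C ⊕ E → C ⊕ E := fun x => if x = inl b then inl b' else x with hσ
  have hσne : ∀ x, σ x ≠ inl b := by
    intro x
    by_cases h : x = inl b <;> simp only [σ, h, if_pos, if_neg, if_true, if_false]
    · exact fun hc => hne (Sum.inl.inj hc).symm
    · simpa using h
  have hσr : ∀ t : E, σ (inr t) = inr t := by intro t; simp [σ]
  have hstep : ∀ x y, flow x y → (DeleteCond flow b) (σ x) (σ y) := by
    intro x y hf
    refine ⟨?_, hσne x, hσne y⟩
    by_cases hx : x = inl b
    · subst hx
      have hy : y ≠ inl b := by
        rcases hnet _ _ hf with ⟨c, e, h1, h2⟩ | ⟨e, c, h1, h2⟩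
        · subst h2; simp
        · simp at h1
      simp only [σ, if_pos rfl, if_neg hy]
      exact hpost hf
    · by_cases hy : y = inl b
      · subst hy
        have hm : x ∈ preset flow (inl b) := hf
        rw [hpre] at hm
        simp only [σ, if_neg hx, if_pos rfl]
        exact hm
      · simp only [σ, if_neg hx, if_neg hy]; exact hf
  have hdrop : ∀ x y, (DeleteCond flow b) x y → flow x y := fun _ _ h => h.1
  have hlift : ∀ x y, ReflTransGen flow x y →
      ReflTransGen (DeleteCond flow b) (σ x) (σ y) := by
    intro x y h
    induction h with
    | refl => exact .refl
    | tail _ h2 ih => exact ih.tail (hstep _ _ h2)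
  have hliftT : ∀ x y, TransGen flow x y →
      TransGen (DeleteCond flow b) (σ x) (σ y) := by
    intro x y h
    induction h with
    | single h => exact .single (hstep _ _ h)
    | tail _ h2 ih => exact ih.tail (hstep _ _ h2)
  intro e f
  have hrtg : ReflTransGen (DeleteCond flow b) (inr e) (inr f) ↔
      ReflTransGen flow (inr e) (inr f) := by
    constructor
    · exact fun h => ReflTransGen.mono hdrop _ _ h
    · intro h
      have := hlift _ _ h
      rwa [hσr, hσr] at this
  have hconf : InConflict (DeleteCond flow b) (inr e) (inr f) ↔
      InConflict flow (inr e) (inr f) := by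
    constructor
    · rintro ⟨t₁, t₂, h12, ⟨z, hz1, hz2⟩, p1, p2⟩
      exact ⟨t₁, t₂, h12, ⟨z, hz1.1, hz2.1⟩,
        ReflTransGen.mono hdrop _ _ p1, ReflTransGen.mono hdrop _ _ p2⟩
    · rintro ⟨t₁, t₂, h12, ⟨z, hz1, hz2⟩, p1, p2⟩
      have h1 := hstep _ _ hz1
      have h2 := hstep _ _ hz2
      rw [hσr] at h1 h2
      have q1 := hlift _ _ p1
      have q2 := hlift _ _ p2
      rw [hσr, hσr] at q1 q2
      exact ⟨t₁, t₂, h12, ⟨σ z, h1, h2⟩, q1, q2⟩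
  have hcaus : ∀ g h : E, Causal (DeleteCond flow b) (inr g) (inr h) ↔
      Causal flow (inr g) (inr h) := by
    intro g h
    constructor
    · exact fun h => TransGen.mono hdrop _ _ h
    · intro hc
      have := hliftT _ _ hc
      rwa [hσr, hσr] at this
  refine ⟨hrtg, hconf, ?_⟩
  unfold Concurrent
  rw [hcaus, hcaus, hconf]
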